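/- arXiv:2010.15975 — 4 statements merged into one kernel-verified Lean document; each statement's English description precedes it below -/
import Mathlib

section
/- The transition system T^di derived from a succinct AFA is well-structured with respect to the inverse pointwise order on state bit-vectors: if Trans(q̄, q̄′) holds and p̄ ≼ q̄, then Trans(p̄, q̄′) also holds (deactivating AFA states can only enable more transitions). Moreover, the set of final configurations, defined by the negative formula F, is downward-closed with respect to ≼. -/
/-- Boolean formulae over variables of type `α`. -/
inductive BF (α : Type) : Type where
  | var : α → BF α
  | tru : BF α
  | fls : BF α
  | and : BF α → BF α → BF α
  | or  : BF α → BF α → BF α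
  | not : BF α → BF α

namespace BF

variable {α β : Type}

/-- Evaluation of a Boolean formula under an assignment. -/
def eval (A : α → Bool) : BF α → Bool
  | var v => A v
  | tru => true
  | fls => false
  | and f g => f.eval A && g.eval A
  | or f g => f.eval A || g.eval A
  | not f => ! f.eval A

/-- `PolarOn P b φ` holds iff every occurrence of a variable satisfying `P`
is under an even number of negations when `b = true`, resp. an odd number
of negations when `b = false`. -/
def PolarOn (P : α → Prop) : Bool → BF α → Prop
  | b, var v => P v → b = true
  | _, tru => True
  | _, fls => True
  | b, and f g => PolarOn P b f ∧ PolarOn P b g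
  | b, or f g => PolarOn P b f ∧ PolarOn P b g
  | b, not f => PolarOn P (!b) f

/-- A formula is positive if every variable occurs under an even number of negations. -/
def Positive (φ : BF α) : Prop := PolarOn (fun _ => True) true φ

/-- A formula is negative if every variable occurs under an odd number of negations. -/
def Negative (φ : BF α) : Prop := PolarOn (fun _ => True) false φ

/-- Renaming of variables. -/
def map (f : α → β) : BF α → BF β
  | var v => var (f v)
  | tru => tru
  | fls => fls
  | and g h => and (g.map f) (h.map f)
  | or g h => or (g.map f) (h.map f)
  | not g => not (g.map f)

/-- The set of variables occurring in a formula. -/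
def varSet : BF α → Set α
  | var v => {v}
  | tru => ∅
  | fls => ∅
  | and f g => f.varSet ∪ g.varSet
  | or f g => f.varSet ∪ g.varSet
  | not f => f.varSet

/-- Finite conjunction. -/
def bigAnd (l : List (BF α)) : BF α := l.foldr and tru

/-- Finite disjunction. -/
def bigOr (l : List (BF α)) : BF α := l.foldr or fls

/-- Biconditional. -/
def iff (f g : BF α) : BF α := (f.and g).or (f.not.and g.not)

end BF

/-- A succinct alternating finite automaton over input bit variables `ι` and
states `Q`: the transition function assigns to each state a Boolean formula
over input variables and states, and there are an initial and a final formula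
over states. -/
structure AFA (ι Q : Type) where
  delta : Q → BF (ι ⊕ Q)
  init : BF Q
  final : BF Q

namespace AFA

variable {ι Q Q' : Type}

/-- Well-formedness of a succinct AFA: transition formulae are positive on
states, the initial formula is positive, and the final formula is negative. -/
def WF (M : AFA ι Q) : Prop :=
  (∀ q, BF.PolarOn (fun x => ∃ p, x = Sum.inr p) true (M.delta q)) ∧
    M.init.Positive ∧ M.final.Negative

/-- One step of a run: every state active in `α` has its transition formula
satisfied by the input letter `b` together with the successor configuration `α'`. -/
def Step (M : AFA ι Q) (α : Q → Bool) (b : ι → Bool) (α' : Q → Bool) : Prop :=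
  ∀ q, α q = true → (M.delta q).eval (Sum.elim b α') = true

/-- A run of the AFA over the word `w`, given by its sequence of configurations. -/
def IsRun (M : AFA ι Q) (w : List (ι → Bool)) (αs : Fin (w.length + 1) → Q → Bool) : Prop :=
  ∀ i : Fin w.length, M.Step (αs i.castSucc) (w.get i) (αs i.succ)

/-- Acceptance: there is a run whose first configuration satisfies the initial
formula and whose last configuration satisfies the final formula. -/
def Accepts (M : AFA ι Q) (w : List (ι → Bool)) : Prop :=
  ∃ αs : Fin (w.length + 1) → Q → Bool,
    M.IsRun w αs ∧ M.init.eval (αs 0) = true ∧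
      M.final.eval (αs (Fin.last w.length)) = true

/-- The language of an AFA. -/
def Lang (M : AFA ι Q) : Set (List (ι → Bool)) := {w | M.Accepts w}

/-- Product (intersection) construction on AFAs with disjoint state sets. -/
def inter (M : AFA ι Q) (M' : AFA ι Q') : AFA ι (Q ⊕ Q') where
  delta := fun q => match q with
    | .inl q => (M.delta q).map (Sum.map id Sum.inl)
    | .inr q => (M'.delta q).map (Sum.map id Sum.inr)
  init := (M.init.map Sum.inl).and (M'.init.map Sum.inr)
  final := (M.final.map Sum.inl).and (M'.final.map Sum.inr)

/-- Union construction on AFAs with disjoint state sets. -/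
def union (M : AFA ι Q) (M' : AFA ι Q') : AFA ι (Q ⊕ Q') where
  delta := fun q => match q with
    | .inl q => (M.delta q).map (Sum.map id Sum.inl)
    | .inr q => (M'.delta q).map (Sum.map id Sum.inr)
  init := (M.init.map Sum.inl).or (M'.init.map Sum.inr)
  final := (M.final.map Sum.inl).and (M'.final.map Sum.inr)

end AFA

/-- The pointwise order on bit-vectors in 𝔹^m. -/
def BVLe {m : ℕ} (p q : Fin m → Bool) : Prop := ∀ i, p i = true → q i = true

/-- The transition relation of the Boolean transition system `T^di` derived from
an AFA with `m` states: `Trans q̄ q̄′` holds iff there is an input bit-vector `v̄`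
such that every active pre-state `i` has `Δ(q_i)` satisfied at `(v̄, q̄′)`. -/
def TransDi {nv m : ℕ} (Δ : Fin m → BF (Fin nv ⊕ Fin m)) (q q' : Fin m → Bool) : Prop :=
  ∃ v : Fin nv → Bool, ∀ i, q i = true → (Δ i).eval (Sum.elim v q') = true

lemma polar_mono {α : Type} (φ : BF α) : ∀ (b : Bool) (A B : α → Bool),
    (∀ v, A v = true → B v = true) → BF.PolarOn (fun _ => True) b φ →
    (cond b (φ.eval A = true → φ.eval B = true)
            (φ.eval B = true → φ.eval A = true)) := by
  induction φ with
  | var v =>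
    intro b A B hAB hp
    cases b with
    | true => simpa [BF.eval] using hAB v
    | false => exact absurd (hp trivial) (by simp)
  | tru => intro b A B _ _; cases b <;> simp [BF.eval]
  | fls => intro b A B _ _; cases b <;> simp [BF.eval]
  | and f g ihf ihg =>
    intro b A B hAB hp
    have h1 := ihf b A B hAB hp.1
    have h2 := ihg b A B hAB hp.2
    cases b <;> simp only [cond] at h1 h2 ⊢ <;>
      (intro h; simp only [BF.eval, Bool.and_eq_true] at h ⊢;
       exact ⟨h1 h.1, h2 h.2⟩)
  | or f g ihf ihg =>
    intro b A B hAB hp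
    have h1 := ihf b A B hAB hp.1
    have h2 := ihg b A B hAB hp.2
    cases b <;> simp only [cond] at h1 h2 ⊢ <;>
      (intro h; simp only [BF.eval, Bool.or_eq_true] at h ⊢;
       rcases h with h | h
       · exact Or.inl (h1 h)
       · exact Or.inr (h2 h))
  | not f ihf =>
    intro b A B hAB hp
    have h1 := ihf (!b) A B hAB hp
    cases b <;> simp only [cond, Bool.not_true, Bool.not_false] at h1 ⊢ <;>
      (intro h; simp only [BF.eval, Bool.not_eq_true'] at h ⊢;
       by_contra hc; simp only [Bool.not_eq_false] at hc;
       exact absurd (h1 hc) (by simp [h]))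

/-- the transition system `T^di` of a succinct AFA is
well-structured w.r.t. the inverse pointwise order: if `Trans(q̄,q̄′)` holds and
`p̄ ≼ q̄` then `Trans(p̄,q̄′)`; moreover the set of final configurations, given by
the negative final formula `F`, is downward-closed w.r.t. `≼`. -/
theorem transition_system_well_structured {nv m : ℕ}
    (Δ : Fin m → BF (Fin nv ⊕ Fin m))
    (hΔ : ∀ i, BF.PolarOn (fun x => ∃ p, x = Sum.inr p) true (Δ i))
    (F : BF (Fin m)) (hF : F.Negative) :
    (∀ p q q' : Fin m → Bool, TransDi Δ q q' → BVLe p q → TransDi Δ p q') ∧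
    (∀ p q : Fin m → Bool, F.eval q = true → BVLe p q → F.eval p = true) := by
  constructor
  · rintro p q q' ⟨v, hv⟩ hpq
    exact ⟨v, fun i hi => hv i (hpq i hi)⟩
  · intro p q hq hpq
    exact polar_mono F false p q hpq hF hq
end

section
/- The language L(𝒜) of a succinct AFA 𝒜 is nonempty if and only if the transition system T^di_𝒜 = (𝔹^m, Init, Trans) can reach from some state satisfying Init a state satisfying Final, where Init is given by the initial formula I, Trans(q̄,q̄′) holds iff ∃v̄. ⋀_i (q_i → Δ(q_i)[v̄, q̄′]), and Final is given by the final formula F. -/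
/-- Reachability in a transition system: a finite sequence of states starting
in an initial state, following transitions, and ending in a final state. -/
def Reach {S : Type} (Init : S → Prop) (Tr : S → S → Prop) (Final : S → Prop) : Prop :=
  ∃ (n : ℕ) (qs : Fin (n + 1) → S),
    Init (qs 0) ∧ (∀ i : Fin n, Tr (qs i.castSucc) (qs i.succ)) ∧ Final (qs (Fin.last n))

/-- the language of a succinct AFA `M` with `m` states is nonempty
iff the Boolean transition system `T^di_M = (𝔹^m, Init, Trans)` can reach from a
state satisfying the initial formula `I` a state satisfying the final formula
`F`, where `Trans(q̄,q̄′)` holds iff `∃v̄. ⋀_i (q_i → Δ(q_i)[v̄, q̄′])`. -/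
theorem afa_emptiness_as_reachability {nv m : ℕ} (M : AFA (Fin nv) (Fin m))
    (hwf : M.WF) :
    M.Lang.Nonempty ↔
      Reach (fun q : Fin m → Bool => M.init.eval q = true)
        (fun q q' => ∃ v : Fin nv → Bool,
          ∀ i, q i = true → (M.delta i).eval (Sum.elim v q') = true)
        (fun q => M.final.eval q = true) := by
  constructor
  · rintro ⟨w, αs, hrun, hinit, hfin⟩
    exact ⟨w.length, αs, hinit, fun i => ⟨w.get i, hrun i⟩, hfin⟩
  · rintro ⟨n, qs, hinit, htr, hfin⟩
    choose v hv using htr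
    have hlen : (List.ofFn v).length = n := List.length_ofFn
    refine ⟨List.ofFn v, fun i => qs (Fin.cast (by rw [hlen]) i), ?_, ?_, ?_⟩
    · intro i q hq
      have h := hv (Fin.cast hlen i) q (by convert hq using 3; simp [Fin.ext_iff])
      convert h using 3
      exact List.get_ofFn v i
      exact congrArg qs (Fin.ext (by simp))
    · exact hinit
    · convert hfin using 2
      simp [Fin.ext_iff, hlen]
end

section
/- Reachability of the target set in the direct transition system T^di of an AFA is equivalent to reachability in the restricted system T^min which only keeps transitions to ≼-minimal post-states: T^di can reach a configuration satisfying the downward-closed target Final if and only if T^min can. -/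
/-- The strict pointwise order on bit-vectors. -/
def BVLt {m : ℕ} (p q : Fin m → Bool) : Prop := BVLe p q ∧ p ≠ q

lemma BVLe_refl {m : ℕ} (q : Fin m → Bool) : BVLe q q := fun _ h => h

lemma BVLe_trans {m : ℕ} {p q r : Fin m → Bool} (h1 : BVLe p q) (h2 : BVLe q r) :
    BVLe p r := fun i h => h2 i (h1 i h)

def bvweight {m : ℕ} (q : Fin m → Bool) : ℕ :=
  (Finset.univ.filter (fun i => q i = true)).card

lemma bvweight_lt {m : ℕ} {p q : Fin m → Bool} (h : BVLt p q) :
    bvweight p < bvweight q := by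
  apply Finset.card_lt_card
  constructor
  · intro i hi
    simp only [Finset.mem_filter, Finset.mem_univ, true_and] at *
    exact h.1 i hi
  · intro hsub
    apply h.2
    funext i
    cases hp : p i with
    | true => exact (h.1 i hp).symm
    | false =>
      cases hq : q i with
      | true =>
        have : p i = true := by
          have := hsub (by simp [hq] : i ∈ Finset.univ.filter (fun i => q i = true))
          simpa using this
        rw [hp] at this; exact absurd this (by simp)
      | false => rfl

lemma exists_bv_min {m : ℕ} (S : (Fin m → Bool) → Prop) (q : Fin m → Bool) (hq : S q) :
    ∃ p, S p ∧ BVLe p q ∧ ∀ r, BVLt r p → ¬ S r := by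
  have H : ∀ n (q : Fin m → Bool), bvweight q ≤ n → S q →
      ∃ p, S p ∧ BVLe p q ∧ ∀ r, BVLt r p → ¬ S r := by
    intro n
    induction n with
    | zero =>
      intro q hw hq
      refine ⟨q, hq, BVLe_refl q, fun r hr hSr => ?_⟩
      have := bvweight_lt hr; omega
    | succ n ih =>
      intro q hw hq
      by_cases h : ∃ r, BVLt r q ∧ S r
      · obtain ⟨r, hr, hSr⟩ := h
        have hwr : bvweight r ≤ n := by have := bvweight_lt hr; omega
        obtain ⟨p, hSp, hle, hmin⟩ := ih r hwr hSr
        exact ⟨p, hSp, BVLe_trans hle hr.1, hmin⟩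
      · exact ⟨q, hq, BVLe_refl q, fun r hr hSr => h ⟨r, hr, hSr⟩⟩
  exact H (bvweight q) q le_rfl hq

lemma key_min_run {m : ℕ}
    (Init : (Fin m → Bool) → Prop) (Trans : (Fin m → Bool) → (Fin m → Bool) → Prop)
    (hpre : ∀ p q q', Trans q q' → BVLe p q → Trans p q') :
    ∀ n (qs : Fin (n + 1) → (Fin m → Bool)),
      Init (qs 0) → (∀ i : Fin n, Trans (qs i.castSucc) (qs i.succ)) →
      ∃ qs' : Fin (n + 1) → (Fin m → Bool),
        (Init (qs' 0) ∧ ∀ p, BVLt p (qs' 0) → ¬ Init p) ∧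
        (∀ i : Fin n, Trans (qs' i.castSucc) (qs' i.succ) ∧
          ∀ p, BVLt p (qs' i.succ) → ¬ Trans (qs' i.castSucc) p) ∧
        (∀ i, BVLe (qs' i) (qs i)) := by
  intro n
  induction n with
  | zero =>
    intro qs h0 _
    obtain ⟨p, hp, hle, hmin⟩ := exists_bv_min Init (qs 0) h0
    refine ⟨fun _ => p, ⟨hp, hmin⟩, fun i => i.elim0, fun i => ?_⟩
    have : i = 0 := Fin.fin_one_eq_zero i
    rw [this]; exact hle
  | succ n ih =>
    intro qs h0 hT
    obtain ⟨qs', h1, h2, h3⟩ := ih (fun i => qs i.castSucc)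
      (by simpa using h0)
      (by
        intro i
        have := hT i.castSucc
        rw [Fin.succ_castSucc] at this; exact this)
    have hlast : BVLe (qs' (Fin.last n)) (qs (Fin.last n).castSucc) := h3 (Fin.last n)
    have htr : Trans (qs' (Fin.last n)) (qs (Fin.last n).succ) :=
      hpre _ _ _ (hT (Fin.last n)) hlast
    obtain ⟨p, hp, hple, hpmin⟩ :=
      exists_bv_min (fun r => Trans (qs' (Fin.last n)) r) _ htr
    refine ⟨Fin.snoc qs' p, ?_, ?_, ?_⟩
    · have h00 : (Fin.snoc qs' p : Fin (n + 2) → (Fin m → Bool)) 0 = qs' 0 := by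
        have : (0 : Fin (n + 2)) = (0 : Fin (n + 1)).castSucc := by simp
        rw [this, Fin.snoc_castSucc]
      rw [h00]; exact h1
    · intro i
      refine Fin.lastCases ?_ ?_ i
      · have e1 : (Fin.last n).castSucc = ((Fin.last n) : Fin (n+1)).castSucc := rfl
        have e2 : (Fin.snoc qs' p : Fin (n + 2) → _) (Fin.last n).castSucc = qs' (Fin.last n) :=
          Fin.snoc_castSucc ..
        have e3 : (Fin.last n).succ = Fin.last (n + 1) := by
          ext; simp
        have e4 : (Fin.snoc qs' p : Fin (n + 2) → _) (Fin.last n).succ = p := by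
          rw [e3]; exact Fin.snoc_last ..
        rw [e2, e4]
        exact ⟨hp, hpmin⟩
      · intro j
        have e1 : (Fin.snoc qs' p : Fin (n + 2) → _) j.castSucc.castSucc = qs' j.castSucc :=
          Fin.snoc_castSucc ..
        have e2 : (Fin.snoc qs' p : Fin (n + 2) → _) j.castSucc.succ = qs' j.succ := by
          rw [Fin.succ_castSucc]; exact Fin.snoc_castSucc ..
        rw [e1, e2]
        exact h2 j
    · intro i
      refine Fin.lastCases ?_ ?_ i
      · have e3 : (Fin.last n).succ = Fin.last (n + 1) := by ext; simp
        rw [Fin.snoc_last]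
        rw [← e3]
        exact hple
      · intro j
        rw [Fin.snoc_castSucc]
        exact h3 j

theorem reach_direct_iff_reach_min {m : ℕ}
    (Init : (Fin m → Bool) → Prop) (Trans : (Fin m → Bool) → (Fin m → Bool) → Prop)
    (Final : (Fin m → Bool) → Prop)
    (hpost : ∀ q q' q'', Trans q q' → BVLe q' q'' → Trans q q'')
    (hpre : ∀ p q q', Trans q q' → BVLe p q → Trans p q')
    (hfinal : ∀ p q, Final q → BVLe p q → Final p) :
    Reach Init Trans Final ↔
      Reach (fun q => Init q ∧ ∀ p, BVLt p q → ¬ Init p)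
        (fun q q' => Trans q q' ∧ ∀ p, BVLt p q' → ¬ Trans q p)
        Final := by
  constructor
  · rintro ⟨n, qs, h0, hT, hF⟩
    obtain ⟨qs', h1, h2, h3⟩ := key_min_run Init Trans hpre n qs h0 hT
    exact ⟨n, qs', h1, h2, hfinal _ _ hF (h3 _)⟩
  · rintro ⟨n, qs, h0, hT, hF⟩
    exact ⟨n, qs, h0.1, fun i => (hT i).1, hF⟩
end

section
/- Two-rail parameter elimination is correct: for an AFT 𝒜[s̄] with synchronisation parameters s̄ = s₁,…,s_n, initial formula I and final formula F, the parameter-free AFT 𝒜′ obtained by (1) adding states s_i⁺, s_i⁻ with self-loop transitions Δ′(s_i⁺)=s_i⁺, Δ′(s_i⁻)=s_i⁻, (2) initial formula I⁺ ∧ ⋀_i(s_i⁺ ∨ s_i⁻) where I⁺ replaces each negative occurrence ¬s_i in I by s_i⁻ and positive occurrence s_i by s_i⁺, and (3) final formula F⁻ ∧ ⋀_i(¬s_i⁺ ∨ ¬s_i⁻) where F⁻ replaces each positive occurrence s_i in F by ¬s_i⁻ and negative occurrence ¬s_i by ¬s_i⁺, recognises exactly the relation {x̄ : ∃ parameter assignment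 ι. 𝒜 accepts x̄ with ι}. -/
/-- A `k`-track letter over value bit variables `V` and epsilon bit variables `E`
is an assignment to the indexed bit variables `(V ⊕ E) × Fin k`.  The word
carried by track `i` is obtained by erasing all positions in which some epsilon
bit of track `i` is set, and restricting the remaining letters to the value
bits of track `i`. -/
def trackWord {V E : Type} [Fintype E] {k : ℕ}
    (w : List ((V ⊕ E) × Fin k → Bool)) (i : Fin k) : List (V → Bool) :=
  (w.filter fun b => ! decide (∃ e : E, b (Sum.inr e, i) = true)).map
    fun b v => b (Sum.inl v, i)

/-- A `k`-track AFT `M` (an AFA over `(V ⊕ E) × Fin k`) recognises the tuple of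
words `t` iff it accepts some word whose track projections are exactly `t`. -/
def AFA.RelAccepts {V E : Type} [Fintype E] {k : ℕ} {Q : Type}
    (M : AFA ((V ⊕ E) × Fin k) Q) (t : Fin k → List (V → Bool)) : Prop :=
  ∃ w, M.Accepts w ∧ ∀ i, trackWord w i = t i

/-- A succinct alternating automaton/transducer with synchronisation parameters
`P`: the initial and final formulae may mention parameters (positively and
negatively) besides states. -/
structure PAFA (ι P Q : Type) where
  delta : Q → BF (ι ⊕ Q)
  init : BF (P ⊕ Q)
  final : BF (P ⊕ Q)

namespace PAFA

variable {ι P Q : Type}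

/-- Well-formedness: transitions positive on states, the initial formula
positive on states, the final formula negative on states (parameters may occur
with both polarities). -/
def WF (M : PAFA ι P Q) : Prop :=
  (∀ q, BF.PolarOn (fun x => ∃ p, x = Sum.inr p) true (M.delta q)) ∧
    BF.PolarOn (fun x => ∃ q, x = Sum.inr q) true M.init ∧
    BF.PolarOn (fun x => ∃ q, x = Sum.inr q) false M.final

/-- Acceptance of a word with a given parameter assignment `π`. -/
def AcceptsWith (M : PAFA ι P Q) (π : P → Bool) (w : List (ι → Bool)) : Prop :=
  ∃ αs : Fin (w.length + 1) → Q → Bool,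
    (∀ i : Fin w.length, ∀ q, αs i.castSucc q = true →
        (M.delta q).eval (Sum.elim (w.get i) (αs i.succ)) = true) ∧
    M.init.eval (Sum.elim π (αs 0)) = true ∧
    M.final.eval (Sum.elim π (αs (Fin.last w.length))) = true

/-- A `k`-track AFT with parameters recognises the tuple `t` with parameter
assignment `π` iff it accepts with `π` some word whose track projections are `t`. -/
def RelAcceptsWith {V E : Type} [Fintype E] {k : ℕ}
    (M : PAFA ((V ⊕ E) × Fin k) P Q) (π : P → Bool)
    (t : Fin k → List (V → Bool)) : Prop :=
  ∃ w, M.AcceptsWith π w ∧ ∀ i, trackWord w i = t i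

end PAFA

/-- Polarity-aware substitution: in the formula (over parameters `P` and states
`Q`), every parameter occurring positively is replaced by `fpos p`, every
parameter occurring negatively (absorbing the negation) by `fneg p`, while
states are mapped by `fst`; connectives at negative polarity are dualised. -/
def rail {P Q S : Type} (fpos fneg : P → BF S) (fst : Q → BF S) :
    Bool → BF (P ⊕ Q) → BF S
  | b, .var (.inl p) => if b then fpos p else fneg p
  | b, .var (.inr q) => if b then fst q else (fst q).not
  | b, .tru => if b then .tru else .fls
  | b, .fls => if b then .fls else .tru
  | b, .and f g => if b then (rail fpos fneg fst b f).and (rail fpos fneg fst b g)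
      else (rail fpos fneg fst b f).or (rail fpos fneg fst b g)
  | b, .or f g => if b then (rail fpos fneg fst b f).or (rail fpos fneg fst b g)
      else (rail fpos fneg fst b f).and (rail fpos fneg fst b g)
  | b, .not f => rail fpos fneg fst (!b) f

/-- Two-rail parameter elimination: each parameter `s_i` is encoded by a
positive indicator state `s_i⁺ = inr (inl i)` and a negative indicator state
`s_i⁻ = inr (inr i)`, both with self-loop transitions.  The new initial formula
is `I⁺ ∧ ⋀_i (s_i⁺ ∨ s_i⁻)` and the new final formula is
`F⁻ ∧ ⋀_i (¬s_i⁺ ∨ ¬s_i⁻)`. -/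
def elimParams {ι Q : Type} {n : ℕ} (M : PAFA ι (Fin n) Q) :
    AFA ι (Q ⊕ (Fin n ⊕ Fin n)) where
  delta := fun s => match s with
    | .inl q => (M.delta q).map (Sum.map id Sum.inl)
    | .inr x => .var (.inr (.inr x))
  init :=
    (rail (fun p => .var (.inr (.inl p))) (fun p => .var (.inr (.inr p)))
        (fun q => .var (.inl q)) true M.init).and
      (BF.bigAnd ((List.finRange n).map fun p =>
        (BF.var (.inr (.inl p))).or (BF.var (.inr (.inr p)))))
  final :=
    (rail (fun p => (BF.var (.inr (.inr p))).not) (fun p => (BF.var (.inr (.inl p))).not)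
        (fun q => .var (.inl q)) true M.final).and
      (BF.bigAnd ((List.finRange n).map fun p =>
        ((BF.var (.inr (.inl p))).not).or ((BF.var (.inr (.inr p))).not)))

lemma BF.eval_map' {α β : Type} (f : α → β) (A : β → Bool) (φ : BF α) :
    (φ.map f).eval A = φ.eval (A ∘ f) := by
  induction φ <;> simp [BF.map, BF.eval, *]

lemma BF.eval_bigAnd' {α : Type} (A : α → Bool) (l : List (BF α)) :
    (BF.bigAnd l).eval A = true ↔ ∀ f ∈ l, f.eval A = true := by
  induction l with
  | nil => simp [BF.bigAnd, BF.eval]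
  | cons h t ih =>
    simp only [BF.bigAnd, List.foldr] at ih ⊢
    simp [BF.eval, ih]

lemma rail_eval {P Q S : Type} (fpos fneg : P → BF S) (fst : Q → BF S)
    (A : S → Bool) (π : P → Bool) (σ : Q → Bool)
    (hp : ∀ p, (fpos p).eval A = π p) (hn : ∀ p, (fneg p).eval A = !π p)
    (hq : ∀ q, (fst q).eval A = σ q) :
    ∀ (φ : BF (P ⊕ Q)) (b : Bool),
      (rail fpos fneg fst b φ).eval A = (b == φ.eval (Sum.elim π σ)) := by
  intro φ
  induction φ with
  | var v =>
    rcases v with p | q <;> rintro (_ | _) <;>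
      simp [rail, BF.eval, hp, hn, hq]
  | tru => rintro (_ | _) <;> simp [rail, BF.eval]
  | fls => rintro (_ | _) <;> simp [rail, BF.eval]
  | and f g ihf ihg =>
    rintro (_ | _) <;> simp only [rail, BF.eval, ihf, ihg, if_true, Bool.false_eq_true, if_false] <;>
      cases f.eval (Sum.elim π σ) <;> cases g.eval (Sum.elim π σ) <;> rfl
  | or f g ihf ihg =>
    rintro (_ | _) <;> simp only [rail, BF.eval, ihf, ihg, if_true, Bool.false_eq_true, if_false] <;>
      cases f.eval (Sum.elim π σ) <;> cases g.eval (Sum.elim π σ) <;> rfl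
  | not f ih =>
    rintro (_ | _) <;> simp only [rail, BF.eval, ih] <;>
      cases f.eval (Sum.elim π σ) <;> rfl

/-- two-rail parameter elimination is correct: the parameter-free
AFT `elimParams M` recognises exactly the tuples of words that `M` accepts with
some assignment of the synchronisation parameters. -/
theorem param_elimination_correct {V E : Type} [Fintype E] {k n : ℕ} {Q : Type}
    (M : PAFA ((V ⊕ E) × Fin k) (Fin n) Q) (hwf : M.WF)
    (t : Fin k → List (V → Bool)) :
    (elimParams M).RelAccepts t ↔ ∃ π : Fin n → Bool, M.RelAcceptsWith π t := by
  constructor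
  · rintro ⟨w, ⟨αs, hrun, hinit, hfin⟩, htr⟩
    -- monotonicity of indicator states
    have mono : ∀ (x : Fin n ⊕ Fin n) (i : Fin (w.length + 1)),
        αs 0 (.inr x) = true → αs i (.inr x) = true := by
      intro x i h0
      induction i using Fin.induction with
      | zero => exact h0
      | succ i ih =>
        have h := hrun i (.inr x) ih
        simpa [elimParams, BF.eval] using h
    simp only [elimParams, BF.eval, Bool.and_eq_true] at hinit hfin
    obtain ⟨hI, hC⟩ := hinit
    obtain ⟨hF, hD⟩ := hfin
    rw [BF.eval_bigAnd'] at hC hD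
    have hC' : ∀ p : Fin n,
        αs 0 (.inr (.inl p)) = true ∨ αs 0 (.inr (.inr p)) = true := by
      intro p
      have := hC _ (List.mem_map_of_mem (List.mem_finRange p))
      simpa [BF.eval, Bool.or_eq_true] using this
    have hD' : ∀ p : Fin n,
        αs (Fin.last w.length) (.inr (.inl p)) = false ∨
          αs (Fin.last w.length) (.inr (.inr p)) = false := by
      intro p
      have := hD _ (List.mem_map_of_mem (List.mem_finRange p))
      simpa [BF.eval, Bool.or_eq_true, Bool.not_eq_true'] using this
    set π : Fin n → Bool := fun p => αs 0 (.inr (.inl p)) with hπ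
    have h0neg : ∀ p, αs 0 (.inr (.inr p)) = !π p := by
      intro p
      cases hb : π p with
      | false =>
        rcases hC' p with h | h
        · rw [hπ] at hb; simp [hb] at h
        · simp [h]
      | true =>
        have hlast : αs (Fin.last w.length) (.inr (.inl p)) = true :=
          mono _ _ hb
        rcases hD' p with h | h
        · rw [hlast] at h; exact absurd h (by simp)
        · by_contra hcon
          have : αs 0 (.inr (.inr p)) = true := by
            cases h' : αs 0 (.inr (.inr p)) <;> simp_all
          rw [mono (Sum.inr p) (Fin.last w.length) this] at h; exact absurd h (by simp)
    have hlpos : ∀ p, αs (Fin.last w.length) (.inr (.inl p)) = π p := by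
      intro p
      cases hb : π p with
      | true => exact mono _ _ hb
      | false =>
        have h0 : αs 0 (.inr (.inr p)) = true := by rw [h0neg, hb]; simp
        have hl := mono (Sum.inr p) (Fin.last w.length) h0
        rcases hD' p with h | h
        · exact h
        · rw [hl] at h; exact absurd h (by simp)
    have hlneg : ∀ p, αs (Fin.last w.length) (.inr (.inr p)) = !π p := by
      intro p
      cases hb : π p with
      | false =>
        have h0 : αs 0 (.inr (.inr p)) = true := by rw [h0neg, hb]; simp
        rw [mono (Sum.inr p) (Fin.last w.length) h0]; simp
      | true =>
        rcases hD' p with h | h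
        · rw [hlpos p, hb] at h; exact absurd h (by simp)
        · rw [h]; rfl
    refine ⟨π, w, ⟨fun i q => αs i (.inl q), ?_, ?_, ?_⟩, htr⟩
    · intro i q hq'
      have h := hrun i (.inl q) hq'
      rw [show (elimParams M).delta (.inl q)
            = (M.delta q).map (Sum.map id Sum.inl) from rfl,
        BF.eval_map'] at h
      have : (Sum.elim (w.get i) (αs i.succ) ∘ Sum.map id Sum.inl)
          = Sum.elim (w.get i) (fun q => αs i.succ (.inl q)) := by
        funext x; cases x <;> rfl
      rwa [this] at h
    · have := rail_eval (S := Q ⊕ (Fin n ⊕ Fin n)) (fun p => BF.var (.inr (.inl p)))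
        (fun p => BF.var (.inr (.inr p))) (fun q => BF.var (.inl q))
        (αs 0) π (fun q => αs 0 (.inl q))
        (fun p => rfl) (fun p => h0neg p) (fun q => rfl) M.init true
      rw [this] at hI
      simpa using hI
    · have := rail_eval (S := Q ⊕ (Fin n ⊕ Fin n)) (fun p => (BF.var (.inr (.inr p))).not)
        (fun p => (BF.var (.inr (.inl p))).not) (fun q => BF.var (.inl q))
        (αs (Fin.last w.length)) π (fun q => αs (Fin.last w.length) (.inl q))
        (fun p => by simp [BF.eval, hlneg p])
        (fun p => by simp [BF.eval, hlpos p]) (fun q => rfl) M.final true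
      rw [this] at hF
      simpa using hF
  · rintro ⟨π, w, ⟨αs, hrun, hinit, hfin⟩, htr⟩
    refine ⟨w, ⟨fun i => Sum.elim (αs i) (Sum.elim π (fun p => !π p)), ?_, ?_, ?_⟩, htr⟩
    · rintro i (q | x) hq'
      · have h := hrun i q hq'
        rw [show (elimParams M).delta (.inl q)
              = (M.delta q).map (Sum.map id Sum.inl) from rfl, BF.eval_map']
        have : (Sum.elim (w.get i)
              (Sum.elim (αs i.succ) (Sum.elim π fun p => !π p)) ∘ Sum.map id Sum.inl)
            = Sum.elim (w.get i) (αs i.succ) := by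
          funext x; cases x <;> rfl
        rwa [this]
      · simpa [elimParams, BF.eval] using hq'
    · simp only [elimParams, BF.eval, Bool.and_eq_true]
      constructor
      · have := rail_eval (S := Q ⊕ (Fin n ⊕ Fin n)) (fun p => BF.var (.inr (.inl p)))
          (fun p => BF.var (.inr (.inr p))) (fun q => BF.var (.inl q))
          (Sum.elim (αs 0) (Sum.elim π (fun p => !π p))) π (αs 0)
          (fun p => rfl) (fun p => rfl) (fun q => rfl) M.init true
        rw [this]
        simpa using hinit
      · rw [BF.eval_bigAnd']
        intro f hf
        simp only [List.mem_map, List.mem_finRange, true_and] at hf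
        obtain ⟨p, rfl⟩ := hf
        simp [BF.eval]
    · simp only [elimParams, BF.eval, Bool.and_eq_true]
      constructor
      · have := rail_eval (S := Q ⊕ (Fin n ⊕ Fin n)) (fun p => (BF.var (.inr (.inr p))).not)
          (fun p => (BF.var (.inr (.inl p))).not) (fun q => BF.var (.inl q))
          (Sum.elim (αs (Fin.last w.length)) (Sum.elim π (fun p => !π p))) π
          (αs (Fin.last w.length))
          (fun p => by simp [BF.eval]) (fun p => by simp [BF.eval])
          (fun q => rfl) M.final true
        rw [this]
        simpa using hfin
      · rw [BF.eval_bigAnd']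
        intro f hf
        simp only [List.mem_map, List.mem_finRange, true_and] at hf
        obtain ⟨p, rfl⟩ := hf
        simp [BF.eval]
end
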